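/- The set of ∼-equivalence classes of (+)-admissible sequences in 𝔖, partially ordered by ⪯, is a lattice in which the greatest lower bound and the least upper bound are induced by the operations ∧ and ∨ respectively. -/

import Mathlib

namespace KP

/-! ## Quivers on a fixed vertex set `Fin n`.

An orientation is encoded by `Λ : Fin n → Fin n → ℕ`, where `Λ a b` is the number of
arrows from `a` to `b`.  The underlying graph is recorded by `edges Λ a b = Λ a b + Λ b a`. -/

/-- The orientation `σ_x Λ` obtained by reversing every arrow incident with `x`. -/
def flipO {n : ℕ} (x : Fin n) (Λ : Fin n → Fin n → ℕ) : Fin n → Fin n → ℕ :=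
  fun a b => if a = x ∨ b = x then Λ b a else Λ a b

/-- Number of edges of the underlying graph joining `a` and `b`. -/
def edges {n : ℕ} (Λ : Fin n → Fin n → ℕ) (a b : Fin n) : ℕ := Λ a b + Λ b a

/-- `x` is a sink: no arrow starts at `x`. -/
def IsSink {n : ℕ} (Λ : Fin n → Fin n → ℕ) (x : Fin n) : Prop := ∀ y, Λ x y = 0

/-- `S` is a `(+)`-admissible sequence of vertices on `(Γ, Λ)`. -/
def Admissible {n : ℕ} (Λ : Fin n → Fin n → ℕ) : List (Fin n) → Prop
  | [] => True
  | x :: xs => IsSink Λ x ∧ Admissible (flipO x Λ) xs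

/-- The orientation `Λ^S`. -/
def orientAfter {n : ℕ} (Λ : Fin n → Fin n → ℕ) : List (Fin n) → (Fin n → Fin n → ℕ)
  | [] => Λ
  | x :: xs => orientAfter (flipO x Λ) xs

/-- Elementary move: interchange two consecutive vertices not joined by an edge. -/
inductive SwapRel {n : ℕ} (E : Fin n → Fin n → ℕ) : List (Fin n) → List (Fin n) → Prop
  | swap (l₁ l₂ : List (Fin n)) (a b : Fin n) (h : E a b = 0) :
      SwapRel E (l₁ ++ a :: b :: l₂) (l₁ ++ b :: a :: l₂)

/-- The equivalence `∼` on sequences of vertices: reflexive–transitive closure of the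
(symmetric) relation `SwapRel`. -/
def Sim {n : ℕ} (E : Fin n → Fin n → ℕ) : List (Fin n) → List (Fin n) → Prop :=
  Relation.ReflTransGen (SwapRel E)

/-- The preorder `S ⪯ T` : `T ∼ S ++ U` for some `(+)`-admissible sequence `U` on `(Γ, Λ^S)`. -/
def Preceq {n : ℕ} (Λ : Fin n → Fin n → ℕ) (S T : List (Fin n)) : Prop :=
  ∃ U, Admissible (orientAfter Λ S) U ∧ Sim (edges Λ) T (S ++ U)

/-- Support of a sequence of vertices. -/
def suppOf {n : ℕ} (S : List (Fin n)) : Set (Fin n) := {v | v ∈ S}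

/-- The partial order on vertices: `x ≤ y` iff there is a path from `x` to `y` in `(Γ, Λ)`. -/
def PathLE {n : ℕ} (Λ : Fin n → Fin n → ℕ) (x y : Fin n) : Prop :=
  Relation.ReflTransGen (fun a b => Λ a b ≠ 0) x y

/-- A filter (up-closed set) of the poset `(Γ₀, Λ)`. -/
def IsFilter {n : ℕ} (Λ : Fin n → Fin n → ℕ) (F : Set (Fin n)) : Prop :=
  ∀ x ∈ F, ∀ y, PathLE Λ x y → y ∈ F

/-- The principal filter `⟨x⟩`. -/
def upSet {n : ℕ} (Λ : Fin n → Fin n → ℕ) (x : Fin n) : Set (Fin n) := {y | PathLE Λ x y}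

/-- The hull `H_Λ(F)`: the smallest filter containing `F` and every vertex joined
by an edge to a vertex of `F`. -/
def hull {n : ℕ} (Λ : Fin n → Fin n → ℕ) (F : Set (Fin n)) : Set (Fin n) :=
  {y | ∃ x, (x ∈ F ∨ ∃ z ∈ F, edges Λ z x ≠ 0) ∧ PathLE Λ x y}

/-- `segs` is a canonical form of `S` (Proposition 2.1): `S ∼ S₁S₂⋯S_r`, each segment
consists of distinct vertices, is nonempty, and `Supp S_i = Supp (S_i S_{i+1} ⋯ S_r)`. -/
def Segments {n : ℕ} (Λ : Fin n → Fin n → ℕ) (S : List (Fin n))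
    (segs : List (List (Fin n))) : Prop :=
  Admissible Λ segs.flatten ∧ Sim (edges Λ) S segs.flatten ∧
  (∀ seg ∈ segs, seg ≠ [] ∧ seg.Nodup) ∧
  ∀ i, i < segs.length → suppOf (segs.getD i []) = suppOf ((segs.drop i).flatten)

/-- `J` is (a representative of) the join `S ∨ T` (Definition 2.4):  the canonical form of `J`
has `Supp R_i = Supp S_i ∪ Supp T_i` (out-of-range segments read as `∅`). -/
def IsJoin {n : ℕ} (Λ : Fin n → Fin n → ℕ) (S T J : List (Fin n)) : Prop :=
  ∃ CS CT CJ, Segments Λ S CS ∧ Segments Λ T CT ∧ Segments Λ J CJ ∧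
    ∀ i, suppOf (CJ.getD i []) = suppOf (CS.getD i []) ∪ suppOf (CT.getD i [])

/-- `M` is (a representative of) the meet `S ∧ T` (Definition 2.4). -/
def IsMeet {n : ℕ} (Λ : Fin n → Fin n → ℕ) (S T M : List (Fin n)) : Prop :=
  ∃ CS CT CM, Segments Λ S CS ∧ Segments Λ T CT ∧ Segments Λ M CM ∧
    ∀ i, suppOf (CM.getD i []) = suppOf (CS.getD i []) ∩ suppOf (CT.getD i [])

/-- `S` is (equivalent to) the join `T₁ ∨ ⋯ ∨ T_l` of the list of sequences `Ts`. -/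
def IsJoinList {n : ℕ} (Λ : Fin n → Fin n → ℕ) : List (List (Fin n)) → List (Fin n) → Prop
  | [], S => S = []
  | T :: Ts, S => ∃ J, IsJoinList Λ Ts J ∧ IsJoin Λ T J S

/-- The segments of a canonical form of a principal sequence `S_{r,x}` (Definition 3.1). -/
def PrincipalSegs {n : ℕ} (Λ : Fin n → Fin n → ℕ) (segs : List (List (Fin n)))
    (r : ℕ) (x : Fin n) : Prop :=
  segs.length = r ∧ 0 < r ∧
  (∀ i, i + 1 < r → suppOf (segs.getD i []) = hull Λ (suppOf (segs.getD (i+1) []))) ∧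
  suppOf (segs.getD (r-1) []) = upSet Λ x

/-- `S ∼ S_{r,x}`, the principal `(+)`-admissible sequence of size `r` with
`Supp S_r = ⟨x⟩`. -/
def IsPrincipalSeq {n : ℕ} (Λ : Fin n → Fin n → ℕ) (r : ℕ) (x : Fin n)
    (S : List (Fin n)) : Prop :=
  ∃ segs, Segments Λ S segs ∧ PrincipalSegs Λ segs r x

/-- `S` is a principal `(+)`-admissible sequence. -/
def IsPrincipal {n : ℕ} (Λ : Fin n → Fin n → ℕ) (S : List (Fin n)) : Prop :=
  ∃ r x, IsPrincipalSeq Λ r x S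


/-! ## Representations of `(Γ, Λ)` over a field `k`. -/

/-- A (finite-dimensional) representation of the quiver `(Γ, Λ)` over `k`:
the space at vertex `x` is `Fin (d x) → k`, and each arrow carries a linear map. -/
structure Rep (k : Type) [Field k] (n : ℕ) (Λ : Fin n → Fin n → ℕ) where
  d : Fin n → ℕ
  f : ∀ a b : Fin n, Fin (Λ a b) → ((Fin (d a) → k) →ₗ[k] (Fin (d b) → k))

variable {k : Type} [Field k] {n : ℕ}

/-- A morphism of representations. -/
structure RepHom {Λ : Fin n → Fin n → ℕ} (M N : Rep k n Λ) where
  g : ∀ x, (Fin (M.d x) → k) →ₗ[k] (Fin (N.d x) → k)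
  comm : ∀ a b i v, g b (M.f a b i v) = N.f a b i (g a v)

/-- Isomorphism of representations. -/
def RepIso {Λ : Fin n → Fin n → ℕ} (M N : Rep k n Λ) : Prop :=
  ∃ g : ∀ x, (Fin (M.d x) → k) ≃ₗ[k] (Fin (N.d x) → k),
    ∀ a b i v, g b (M.f a b i v) = N.f a b i (g a v)

/-- The zero representation. -/
def IsZeroRep {Λ : Fin n → Fin n → ℕ} (M : Rep k n Λ) : Prop := ∀ x, M.d x = 0

/-- Cast between the standard spaces. -/
def castL (k : Type) [Field k] {m m' : ℕ} (h : m = m') : (Fin m → k) ≃ₗ[k] (Fin m' → k) :=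
  LinearEquiv.funCongrLeft k k (finCongr h.symm)

/-- The splitting `(Fin (m + p) → k) ≃ₗ (Fin m → k) × (Fin p → k)`. -/
def splitL (k : Type) [Field k] (m p : ℕ) : (Fin (m + p) → k) ≃ₗ[k] (Fin m → k) × (Fin p → k) :=
  (LinearEquiv.funCongrLeft k k finSumFinEquiv).trans
    (LinearEquiv.sumArrowLequivProdArrow _ _ k k)

/-- Direct sum of two representations. -/
def dSum {Λ : Fin n → Fin n → ℕ} (M N : Rep k n Λ) : Rep k n Λ where
  d x := M.d x + N.d x
  f a b i :=
    (splitL k (M.d b) (N.d b)).symm.toLinearMap ∘ₗ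
      (LinearMap.prodMap (M.f a b i) (N.f a b i)) ∘ₗ (splitL k (M.d a) (N.d a)).toLinearMap

/-- The zero representation (as an object). -/
def zeroRep (k : Type) [Field k] (n : ℕ) (Λ : Fin n → Fin n → ℕ) : Rep k n Λ where
  d _ := 0
  f _ _ _ := 0

/-- Direct sum of a list of representations. -/
def dSumList {Λ : Fin n → Fin n → ℕ} (L : List (Rep k n Λ)) : Rep k n Λ :=
  L.foldr dSum (zeroRep k n Λ)

/-- `M` is indecomposable. -/
def Indecomp {Λ : Fin n → Fin n → ℕ} (M : Rep k n Λ) : Prop :=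
  ¬ IsZeroRep M ∧ ∀ A B : Rep k n Λ, RepIso M (dSum A B) → IsZeroRep A ∨ IsZeroRep B

/-- `X` is a direct summand of `M`. -/
def IsSummand {Λ : Fin n → Fin n → ℕ} (X M : Rep k n Λ) : Prop :=
  ∃ Y, RepIso M (dSum X Y)

/-! ### Reflection functors (on objects) -/

/-- Index type of the arrows ending at `x`. -/
abbrev Arin {n : ℕ} (Λ : Fin n → Fin n → ℕ) (x : Fin n) := Σ y : Fin n, Fin (Λ y x)

/-- Index type of the arrows starting at `x`. -/
abbrev Aout {n : ℕ} (Λ : Fin n → Fin n → ℕ) (x : Fin n) := Σ y : Fin n, Fin (Λ x y)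

/-- The map `h : ⊕_{a : y → x} V(y) → V(x)` induced by the maps along the arrows ending at `x`. -/
noncomputable def inMap (Λ : Fin n → Fin n → ℕ) (M : Rep k n Λ) (x : Fin n) :
    ((p : Arin Λ x) → (Fin (M.d p.1) → k)) →ₗ[k] (Fin (M.d x) → k) :=
  ∑ p : Arin Λ x, (M.f p.1 x p.2) ∘ₗ LinearMap.proj p

/-- The map `h' : V(x) → ⊕_{a : x → y} V(y)` induced by the maps along arrows starting at `x`. -/
def outMap (Λ : Fin n → Fin n → ℕ) (M : Rep k n Λ) (x : Fin n) :
    (Fin (M.d x) → k) →ₗ[k] ((p : Aout Λ x) → (Fin (M.d p.1) → k)) :=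
  LinearMap.pi fun p => M.f x p.1 p.2

noncomputable def kerEquiv (Λ : Fin n → Fin n → ℕ) (M : Rep k n Λ) (x : Fin n) :
    LinearMap.ker (inMap Λ M x) ≃ₗ[k]
      (Fin (Module.finrank k (LinearMap.ker (inMap Λ M x))) → k) :=
  (Module.finBasis k _).equivFun

noncomputable def cokerEquiv (Λ : Fin n → Fin n → ℕ) (M : Rep k n Λ) (x : Fin n) :
    (((p : Aout Λ x) → (Fin (M.d p.1) → k)) ⧸ LinearMap.range (outMap Λ M x)) ≃ₗ[k]
      (Fin (Module.finrank k (((p : Aout Λ x) → (Fin (M.d p.1) → k)) ⧸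
        LinearMap.range (outMap Λ M x))) → k) :=
  (Module.finBasis k _).equivFun

/-- The positive reflection functor `F_x⁺` (on objects): the space at `x` is replaced
by the kernel of `inMap`, with the maps along the reversed arrows induced by inclusion
followed by the projections. -/
noncomputable def reflPlus (x : Fin n) (Λ : Fin n → Fin n → ℕ) (M : Rep k n Λ) :
    Rep k n (flipO x Λ) where
  d z := if z = x then Module.finrank k (LinearMap.ker (inMap Λ M x)) else M.d z
  f a b i :=
    if ha : a = x then
      if hb : b = x then 0
      else
        (castL k (if_neg hb).symm).toLinearMap ∘ₗ
          (LinearMap.proj (φ := fun p : Arin Λ x => Fin (M.d p.1) → k)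
            (⟨b, Fin.cast (by subst ha; simp [flipO]) i⟩ : Arin Λ x)) ∘ₗ
          (LinearMap.ker (inMap Λ M x)).subtype ∘ₗ
          (kerEquiv Λ M x).symm.toLinearMap ∘ₗ (castL k (if_pos ha)).toLinearMap
    else
      if hb : b = x then 0
      else
        (castL k (if_neg hb).symm).toLinearMap ∘ₗ
          M.f a b (Fin.cast (by simp [flipO, ha, hb]) i) ∘ₗ
          (castL k (if_neg ha)).toLinearMap

/-- The negative reflection functor `F_x⁻` (on objects), presented as a map from
representations of `(Γ, σ_x Λ)` to representations of `(Γ, Λ)`: the space at `x` is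
replaced by the cokernel of `outMap`. -/
noncomputable def reflMinus (x : Fin n) (Λ : Fin n → Fin n → ℕ)
    (N : Rep k n (flipO x Λ)) : Rep k n Λ where
  d z := if z = x then
      Module.finrank k (((p : Aout (flipO x Λ) x) → (Fin (N.d p.1) → k)) ⧸
        LinearMap.range (outMap (flipO x Λ) N x))
    else N.d z
  f a b i :=
    if hb : b = x then
      if ha : a = x then 0
      else
        (castL k (if_pos hb).symm).toLinearMap ∘ₗ
          (cokerEquiv (flipO x Λ) N x).toLinearMap ∘ₗ
          (LinearMap.range (outMap (flipO x Λ) N x)).mkQ ∘ₗ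
          (LinearMap.single k (fun p : Aout (flipO x Λ) x => Fin (N.d p.1) → k)
            (⟨a, Fin.cast (by subst hb; simp [flipO]) i⟩ : Aout (flipO x Λ) x)) ∘ₗ
          (castL k (if_neg ha)).toLinearMap
    else
      if ha : a = x then 0
      else
        (castL k (if_neg hb).symm).toLinearMap ∘ₗ
          N.f a b (Fin.cast (by simp [flipO, ha, hb]) i) ∘ₗ
          (castL k (if_neg ha)).toLinearMap

/-- `F(S) = F_{x_s}⁺ ⋯ F_{x_1}⁺` applied to a representation. -/
noncomputable def FList : (S : List (Fin n)) → (Λ : Fin n → Fin n → ℕ) → Rep k n Λ →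
    Rep k n (orientAfter Λ S)
  | [], _, M => M
  | x :: xs, Λ, M => FList xs (flipO x Λ) (reflPlus x Λ M)

/-- `S` annihilates `M` : `F(S) M = 0`. -/
def Annihilates (Λ : Fin n → Fin n → ℕ) (S : List (Fin n)) (M : Rep k n Λ) : Prop :=
  IsZeroRep (FList S Λ M)

/-- `M` is preprojective: some `(+)`-admissible sequence annihilates it. -/
def Preprojective (Λ : Fin n → Fin n → ℕ) (M : Rep k n Λ) : Prop :=
  ∃ S, Admissible Λ S ∧ Annihilates Λ S M

/-- `S` is a shortest `(+)`-admissible sequence annihilating `M` : it annihilates `M` and no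
proper subsequence of `S` annihilates `M`.  (This predicate is invariant under `∼`, so it
expresses `S ∼ S_M`.) -/
def IsShortestAnn (Λ : Fin n → Fin n → ℕ) (M : Rep k n Λ) (S : List (Fin n)) : Prop :=
  Admissible Λ S ∧ Annihilates Λ S M ∧
  ∀ S', Admissible Λ S' → Annihilates Λ S' M → Preceq Λ S' S → Sim (edges Λ) S' S

/-- The simple representation `L_x` concentrated at the vertex `x`. -/
def simpleRep (Λ : Fin n → Fin n → ℕ) (x : Fin n) : Rep k n Λ where
  d z := if z = x then 1 else 0
  f _ _ _ := 0

/-- `M(S) = F_{x₁}⁻ F_{x₂}⁻ ⋯ F_{x_{s-1}}⁻ (L_{x_s})`, where `L_{x_s}` is the simple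
(projective) module over `k(Γ, σ_{x_{s-1}} ⋯ σ_{x_1} Λ)` at the vertex `x_s`. -/
noncomputable def Mof : (Λ : Fin n → Fin n → ℕ) → (S : List (Fin n)) → Rep k n Λ
  | Λ, [] => zeroRep k n Λ
  | Λ, [x] => simpleRep Λ x
  | Λ, x :: y :: ys => reflMinus x Λ (Mof (flipO x Λ) (y :: ys))

variable {n : ℕ}

/-! ## The Weyl group -/

/-- The simple reflection `σ_i` attached to a generalized Cartan matrix `A`,
as a linear endomorphism of `ℤⁿ` : `σ_i(v) = v - (∑ l, a_{il} v_l) e_i`. -/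
def sigmaL (A : Fin n → Fin n → ℤ) (i : Fin n) : (Fin n → ℤ) →ₗ[ℤ] (Fin n → ℤ) where
  toFun v := v - (∑ l, A i l * v l) • Pi.single i 1
  map_add' v w := by
    simp only [Pi.add_apply, mul_add, Finset.sum_add_distrib, add_smul]
    abel
  map_smul' c v := by
    simp only [Pi.smul_apply, smul_eq_mul, RingHom.id_apply, smul_sub]
    congr 1
    rw [smul_smul, Finset.mul_sum]
    congr 1
    exact Finset.sum_congr rfl fun l _ => by ring

theorem sigma_invol (A : Fin n → Fin n → ℤ) (hA : ∀ i, A i i = 2) (i : Fin n) :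
    (sigmaL A i).comp (sigmaL A i) = LinearMap.id := by
  apply LinearMap.ext
  intro v
  simp only [LinearMap.comp_apply, LinearMap.id_apply, sigmaL, LinearMap.coe_mk, AddHom.coe_mk]
  set c := ∑ l, A i l * v l with hc
  set s : Fin n → ℤ := Pi.single i 1 with hs
  have h1 : ∑ l, A i l * (v - c • s) l = -c := by
    have h2 : ∀ l, A i l * (v - c • s) l = A i l * v l - c * (A i l * s l) := fun l => by
      simp only [Pi.sub_apply, Pi.smul_apply, smul_eq_mul]
      ring
    rw [Finset.sum_congr rfl fun l _ => h2 l, Finset.sum_sub_distrib, ← Finset.mul_sum]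
    have h3 : ∑ l, A i l * s l = 2 := by
      rw [Finset.sum_eq_single i]
      · simp [hs, hA i]
      · intro b _ hb
        simp [hs, Pi.single_eq_of_ne hb]
      · simp
    rw [h3, ← hc]
    ring
  rw [h1]
  ext j
  simp only [Pi.sub_apply, Pi.smul_apply, smul_eq_mul]
  ring

/-- The simple reflection `σ_i` as an automorphism of `ℤⁿ`. -/
def sigmaE (A : Fin n → Fin n → ℤ) (hA : ∀ i, A i i = 2) (i : Fin n) :
    (Fin n → ℤ) ≃ₗ[ℤ] (Fin n → ℤ) :=
  LinearEquiv.ofLinear (sigmaL A i) (sigmaL A i) (sigma_invol A hA i) (sigma_invol A hA i)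

/-- The length `ℓ(w)`: the least `l ≥ 0` such that `w` is a product of `l` simple
reflections. -/
noncomputable def wordLen (A : Fin n → Fin n → ℤ) (hA : ∀ i, A i i = 2)
    (w : (Fin n → ℤ) ≃ₗ[ℤ] (Fin n → ℤ)) : ℕ :=
  sInf {l | ∃ ys : List (Fin n), ys.length = l ∧ w = (ys.map (sigmaE A hA)).prod}

/-- The word `w(S) = σ_{x_s} ⋯ σ_{x_1}` associated to a sequence `S = x₁, …, x_s`. -/
def wordOf (A : Fin n → Fin n → ℤ) (hA : ∀ i, A i i = 2) (S : List (Fin n)) :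
    (Fin n → ℤ) ≃ₗ[ℤ] (Fin n → ℤ) :=
  ((S.reverse).map (sigmaE A hA)).prod

/-- The symmetric generalized Cartan matrix of the underlying graph of `(Γ, Λ)`. -/
def cartanOf (Λ : Fin n → Fin n → ℕ) : Fin n → Fin n → ℤ :=
  fun i j => if i = j then 2 else -(edges Λ i j : ℤ)

theorem cartan_diag (Λ : Fin n → Fin n → ℕ) : ∀ i, cartanOf Λ i i = 2 := by
  intro i; simp [cartanOf]

/-- The simple reflections of the Weyl group of the underlying graph of `(Γ, Λ)`. -/
def wSig (Λ : Fin n → Fin n → ℕ) : Fin n → ((Fin n → ℤ) ≃ₗ[ℤ] (Fin n → ℤ)) :=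
  sigmaE (cartanOf Λ) (cartan_diag Λ)

/-- `w(S)` for a sequence of vertices of `(Γ, Λ)`. -/
def wordOfSeq (Λ : Fin n → Fin n → ℕ) (S : List (Fin n)) :
    (Fin n → ℤ) ≃ₗ[ℤ] (Fin n → ℤ) :=
  ((S.reverse).map (wSig Λ)).prod

/-- The word `w(S)` is reduced: `ℓ(w(S))` equals the number of letters of `S`. -/
noncomputable def IsReducedSeq (Λ : Fin n → Fin n → ℕ) (S : List (Fin n)) : Prop :=
  wordLen (cartanOf Λ) (cartan_diag Λ) (wordOfSeq Λ S) = S.length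

/-! ## Dynkin graphs of types A, D, E -/

def edgeA (n : ℕ) : Fin n → Fin n → ℕ := fun i j =>
  if (i : ℕ) + 1 = (j : ℕ) ∨ (j : ℕ) + 1 = (i : ℕ) then 1 else 0

def edgeD (n : ℕ) : Fin n → Fin n → ℕ := fun i j =>
  if ((i : ℕ) = 0 ∧ (j : ℕ) = 2) ∨ ((j : ℕ) = 0 ∧ (i : ℕ) = 2) ∨
     ((i : ℕ) = 1 ∧ (j : ℕ) = 2) ∨ ((j : ℕ) = 1 ∧ (i : ℕ) = 2) ∨
     (2 ≤ (i : ℕ) ∧ (i : ℕ) + 1 = (j : ℕ)) ∨ (2 ≤ (j : ℕ) ∧ (j : ℕ) + 1 = (i : ℕ))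
  then 1 else 0

def edgeE (n : ℕ) : Fin n → Fin n → ℕ := fun i j =>
  if ((i : ℕ) + 1 = (j : ℕ) ∧ (j : ℕ) ≤ n - 2) ∨ ((j : ℕ) + 1 = (i : ℕ) ∧ (i : ℕ) ≤ n - 2) ∨
     ((i : ℕ) = 2 ∧ (j : ℕ) = n - 1) ∨ ((j : ℕ) = 2 ∧ (i : ℕ) = n - 1)
  then 1 else 0

/-- The underlying graph (given by its edge-count function `E`) is a Dynkin diagram of
type `A`, `D`, or `E`. -/
def IsDynkinADE (n : ℕ) (E : Fin n → Fin n → ℕ) : Prop :=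
  ∃ e : Fin n ≃ Fin n,
    (∀ i j, E i j = edgeA n (e i) (e j)) ∨
    (4 ≤ n ∧ ∀ i j, E i j = edgeD n (e i) (e j)) ∨
    ((n = 6 ∨ n = 7 ∨ n = 8) ∧ ∀ i j, E i j = edgeE n (e i) (e j))

/-! ## Coxeter-sortable elements -/

/-- Lexicographic comparison of index tuples. -/
def lexLE {s : ℕ} (ι ι' : Fin s → ℕ) : Prop :=
  ι = ι' ∨ ∃ j, (∀ j', j' < j → ι j' = ι' j') ∧ ι j < ι' j

/-- `w` is `c`-sortable for the Coxeter element determined by the half-infinite word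
`cseq` (with dividers every `blockLen` letters): the lexicographically first subsequence
of `cseq` that is a reduced word for `w` defines a sequence of subsets (between adjacent
dividers) that is decreasing under inclusion. -/
def CSortable (A : Fin n → Fin n → ℤ) (hA : ∀ i, A i i = 2) (cseq : ℕ → Fin n)
    (blockLen : ℕ) (w : (Fin n → ℤ) ≃ₗ[ℤ] (Fin n → ℤ)) : Prop :=
  ∃ (s : ℕ) (ι : Fin s → ℕ), StrictMono ι ∧
    w = ((List.ofFn fun j => cseq (ι j)).map (sigmaE A hA)).prod ∧
    wordLen A hA w = s ∧
    (∀ ι' : Fin s → ℕ, StrictMono ι' →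
      w = ((List.ofFn fun j => cseq (ι' j)).map (sigmaE A hA)).prod → lexLE ι ι') ∧
    ∀ m : ℕ, {a : Fin n | ∃ j, (ι j) / blockLen = m + 1 ∧ cseq (ι j) = a} ⊆
             {a : Fin n | ∃ j, (ι j) / blockLen = m ∧ cseq (ι j) = a}


/-- A nonzero non-isomorphism between representations. -/
def RepStep {k : Type} [Field k] {n : ℕ} {Λ : Fin n → Fin n → ℕ} (X Y : Rep k n Λ) : Prop :=
  ∃ f : RepHom X Y, (∃ x v, f.g x v ≠ 0) ∧ ¬ ∀ x, Function.Bijective (f.g x)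

/-- `v` is a minimal element of `D` in the poset `(Γ₀, Λ)`. -/
def MinimalIn {n : ℕ} (Λ : Fin n → Fin n → ℕ) (D : Set (Fin n)) (v : Fin n) : Prop :=
  v ∈ D ∧ ∀ u ∈ D, PathLE Λ u v → u = v

/-- The pairs `(h, v)` of Proposition 3.2(a): `0 < h ≤ r` and `v` a minimal element of
`Supp S_h \ H_Λ(Supp S_{h+1})` (with `Supp S_{r+1} = ∅`). -/
def JoinPair {n : ℕ} (Λ : Fin n → Fin n → ℕ) (segs : List (List (Fin n)))
    (p : ℕ × Fin n) : Prop :=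
  0 < p.1 ∧ p.1 ≤ segs.length ∧
  MinimalIn Λ (suppOf (segs.getD (p.1 - 1) []) \ hull Λ (suppOf (segs.getD p.1 []))) p.2

section LatticeProof
variable {n : ℕ}

private lemma edges_symm (Λ : Fin n → Fin n → ℕ) (a b : Fin n) : edges Λ a b = edges Λ b a :=
  Nat.add_comm _ _

private lemma edges_flipO (x : Fin n) (Λ : Fin n → Fin n → ℕ) :
    edges (flipO x Λ) = edges Λ := by
  funext a b
  simp only [edges, flipO]
  by_cases h : a = x ∨ b = x
  · rw [if_pos h, if_pos h.symm, Nat.add_comm]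
  · rw [if_neg h, if_neg (fun hh => h hh.symm)]

private lemma edges_orientAfter : ∀ (S : List (Fin n)) (Λ : Fin n → Fin n → ℕ),
    edges (orientAfter Λ S) = edges Λ
  | [], _ => rfl
  | x :: xs, Λ => by
      show edges (orientAfter (flipO x Λ) xs) = edges Λ
      rw [edges_orientAfter xs (flipO x Λ), edges_flipO]

private lemma swapRel_symm (Λ : Fin n → Fin n → ℕ) {S T : List (Fin n)}
    (h : SwapRel (edges Λ) S T) : SwapRel (edges Λ) T S := by
  cases h with
  | swap l₁ l₂ a b hab => exact SwapRel.swap l₁ l₂ b a (by rw [edges_symm]; exact hab)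

private lemma sim_symm (Λ : Fin n → Fin n → ℕ) {S T : List (Fin n)}
    (h : Sim (edges Λ) S T) : Sim (edges Λ) T S := by
  induction h with
  | refl => exact Relation.ReflTransGen.refl
  | tail _ hst ih =>
      exact Relation.ReflTransGen.trans (Relation.ReflTransGen.single (swapRel_symm Λ hst)) ih

private lemma swapRel_cons {E : Fin n → Fin n → ℕ} (x : Fin n) {S T : List (Fin n)}
    (h : SwapRel E S T) : SwapRel E (x :: S) (x :: T) := by
  cases h with
  | swap l₁ l₂ a b hab => exact SwapRel.swap (x :: l₁) l₂ a b hab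

private lemma sim_cons {E : Fin n → Fin n → ℕ} (x : Fin n) {S T : List (Fin n)}
    (h : Sim E S T) : Sim E (x :: S) (x :: T) := by
  induction h with
  | refl => exact Relation.ReflTransGen.refl
  | tail _ hst ih => exact ih.tail (swapRel_cons x hst)

private lemma swapRel_append_right {E : Fin n → Fin n → ℕ} (U : List (Fin n))
    {S T : List (Fin n)} (h : SwapRel E S T) : SwapRel E (S ++ U) (T ++ U) := by
  cases h with
  | swap l₁ l₂ a b hab =>
      have := SwapRel.swap (E := E) l₁ (l₂ ++ U) a b hab
      simpa [List.append_assoc] using this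

private lemma sim_append_right {E : Fin n → Fin n → ℕ} (U : List (Fin n))
    {S T : List (Fin n)} (h : Sim E S T) : Sim E (S ++ U) (T ++ U) := by
  induction h with
  | refl => exact Relation.ReflTransGen.refl
  | tail _ hst ih => exact ih.tail (swapRel_append_right U hst)

private lemma swapRel_perm {E : Fin n → Fin n → ℕ} {S T : List (Fin n)}
    (h : SwapRel E S T) : S.Perm T := by
  cases h with
  | swap l₁ l₂ a b hab => exact List.Perm.append_left l₁ (List.Perm.swap b a l₂)

private lemma sim_perm {E : Fin n → Fin n → ℕ} {S T : List (Fin n)}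
    (h : Sim E S T) : S.Perm T := by
  induction h with
  | refl => exact List.Perm.refl _
  | tail _ hst ih => exact ih.trans (swapRel_perm hst)

private lemma sim_count {E : Fin n → Fin n → ℕ} {S T : List (Fin n)}
    (h : Sim E S T) (v : Fin n) : S.count v = T.count v :=
  (sim_perm h).count_eq v

private lemma admissible_append : ∀ (S : List (Fin n)) (Λ : Fin n → Fin n → ℕ)
    (U : List (Fin n)), Admissible Λ S → Admissible (orientAfter Λ S) U →
    Admissible Λ (S ++ U)
  | [], _, _, _, hU => hU
  | _ :: S, _, U, hS, hU => ⟨hS.1, admissible_append S _ U hS.2 hU⟩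

private lemma flipO_comm (x y : Fin n) (Λ : Fin n → Fin n → ℕ) :
    flipO x (flipO y Λ) = flipO y (flipO x Λ) := by
  funext a b
  simp only [flipO]
  by_cases h1 : a = x ∨ b = x <;> by_cases h2 : a = y ∨ b = y <;>
    simp [h1, h2, or_comm]

private lemma isSink_flipO {Λ : Fin n → Fin n → ℕ} {y z : Fin n}
    (hy : IsSink Λ y) (hz : IsSink Λ z) (hne : y ≠ z) : IsSink (flipO z Λ) y := by
  intro w
  simp only [flipO]
  split_ifs with h
  · rcases h with h | h
    · exact absurd h hne
    · subst h; exact hz y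
  · exact hy w

end LatticeProof
section LatticeProof2
variable {n : ℕ}

private lemma sink_pull {y : Fin n} : ∀ (S : List (Fin n)) (Λ : Fin n → Fin n → ℕ),
    IsSink Λ y → Admissible Λ S → y ∈ S →
    ∃ S', Admissible Λ (y :: S') ∧ Sim (edges Λ) S (y :: S')
  | [], _, _, _, hmem => absurd hmem List.not_mem_nil
  | z :: R, Λ, hy, hS, hmem => by
      obtain ⟨hz, hR⟩ := hS
      by_cases hzy : z = y
      · subst hzy
        exact ⟨R, ⟨hz, hR⟩, Relation.ReflTransGen.refl⟩
      · have hmemR : y ∈ R := by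
          rcases List.mem_cons.mp hmem with h | h
          · exact absurd h.symm hzy
          · exact h
        have h1 : Λ z y = 0 := hz y
        have h2 : Λ y z = 0 := hy z
        have hyflip : IsSink (flipO z Λ) y := isSink_flipO hy hz (fun h => hzy h.symm)
        obtain ⟨R', hadm', hsim'⟩ := sink_pull R (flipO z Λ) hyflip hR hmemR
        refine ⟨z :: R', ?_, ?_⟩
        · refine ⟨hy, ?_, ?_⟩
          · exact isSink_flipO hz hy hzy
          · rw [flipO_comm]
            exact hadm'.2
        · have s1 : Sim (edges Λ) (z :: R) (z :: y :: R') := by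
            have := sim_cons (E := edges Λ) z (by rw [← edges_flipO z Λ]; exact hsim')
            exact this
          have s2 : Sim (edges Λ) (z :: y :: R') (y :: z :: R') := by
            refine Relation.ReflTransGen.single ?_
            have := SwapRel.swap (E := edges Λ) [] R' z y (by simp [edges, h1, h2])
            simpa using this
          exact s1.trans s2

private lemma sim_of_count : ∀ (S : List (Fin n)) (Λ : Fin n → Fin n → ℕ) (T : List (Fin n)),
    Admissible Λ S → Admissible Λ T → (∀ v, S.count v = T.count v) → Sim (edges Λ) S T
  | [], Λ, T, _, _, hc => by
      cases T with
      | nil => exact Relation.ReflTransGen.refl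
      | cons w T' =>
          exfalso
          have := hc w
          simp [List.count_cons] at this
  | x :: S', Λ, T, hS, hT, hc => by
      obtain ⟨hx, hS'⟩ := hS
      have hmem : x ∈ T := by
        have := hc x
        have : 0 < T.count x := by simp [List.count_cons] at this; omega
        exact List.count_pos_iff.mp this
      obtain ⟨T', hadm', hsim'⟩ := sink_pull T Λ hx hT hmem
      have hc' : ∀ v, S'.count v = T'.count v := by
        intro v
        have h1 := hc v
        have h2 := sim_count hsim' v
        by_cases hv : v = x <;> simp [List.count_cons, hv] at h1 h2 ⊢ <;> omega
      have ihs : Sim (edges (flipO x Λ)) S' T' :=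
        sim_of_count S' (flipO x Λ) T' hS' hadm'.2 hc'
      rw [edges_flipO] at ihs
      exact Relation.ReflTransGen.trans (sim_cons x ihs) (sim_symm Λ hsim')
  termination_by S => S.length

private lemma count_le_of_preceq {Λ : Fin n → Fin n → ℕ} {S T : List (Fin n)}
    (h : Preceq Λ S T) : ∀ v, S.count v ≤ T.count v := by
  obtain ⟨U, _, hsim⟩ := h
  intro v
  have := sim_count hsim v
  rw [this, List.count_append]
  omega

private lemma preceq_of_count_le : ∀ (S : List (Fin n)) (Λ : Fin n → Fin n → ℕ)
    (T : List (Fin n)), Admissible Λ S → Admissible Λ T →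
    (∀ v, S.count v ≤ T.count v) → Preceq Λ S T
  | [], Λ, T, _, hT, _ => ⟨T, hT, Relation.ReflTransGen.refl⟩
  | x :: S', Λ, T, hS, hT, hc => by
      obtain ⟨hx, hS'⟩ := hS
      have hmem : x ∈ T := by
        have := hc x
        have : 0 < T.count x := by simp [List.count_cons] at this; omega
        exact List.count_pos_iff.mp this
      obtain ⟨T', hadm', hsim'⟩ := sink_pull T Λ hx hT hmem
      have hc' : ∀ v, S'.count v ≤ T'.count v := by
        intro v
        have h1 := hc v
        have h2 := sim_count hsim' v
        by_cases hv : v = x <;> simp [List.count_cons, hv] at h1 h2 ⊢ <;> omega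
      obtain ⟨U, hU, hsim2⟩ := preceq_of_count_le S' (flipO x Λ) T' hS' hadm'.2 hc'
      rw [edges_flipO] at hsim2
      exact ⟨U, hU, hsim'.trans (sim_cons x hsim2)⟩
  termination_by S => S.length

end LatticeProof2
section LatticeProof3
variable {n : ℕ}

private def EdgeCond (Λ : Fin n → Fin n → ℕ) (c : Fin n → ℕ) : Prop :=
  ∀ u v, Λ u v ≠ 0 → c u ≤ c v ∧ c v ≤ c u + 1

private lemma edgeCond_count : ∀ (S : List (Fin n)) (Λ : Fin n → Fin n → ℕ),
    Admissible Λ S → EdgeCond Λ (fun v => S.count v)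
  | [], _, _ => fun u v _ => by simp
  | x :: R, Λ, hS => by
      obtain ⟨hx, hR⟩ := hS
      have ih := edgeCond_count R (flipO x Λ) hR
      intro u v huv
      dsimp only
      by_cases hu : u = x
      · exact absurd (hu ▸ hx v) huv
      · by_cases hv : v = x
        · have harr : flipO x Λ x u ≠ 0 := by
            simp only [flipO]
            rw [if_pos (by tauto), ← hv]
            exact huv
          have h5 := ih x u harr
          dsimp only at h5
          have e1 : List.count u (x :: R) = List.count u R := by
            simp [List.count_cons, hu, Ne.symm hu]
          have e2 : List.count v (x :: R) = List.count x R + 1 := by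
            rw [hv]; simp [List.count_cons]
          rw [e1, e2]
          omega
        · have harr : flipO x Λ u v ≠ 0 := by
            simp only [flipO]
            rw [if_neg (by tauto)]
            exact huv
          have h5 := ih u v harr
          dsimp only at h5
          have e1 : List.count u (x :: R) = List.count u R := by
            simp [List.count_cons, hu, Ne.symm hu]
          have e2 : List.count v (x :: R) = List.count v R := by
            simp [List.count_cons, hv, Ne.symm hv]
          rw [e1, e2]
          omega

private def Acyc (Λ : Fin n → Fin n → ℕ) : Prop :=
  ∀ a, ¬ Relation.TransGen (fun u v => Λ u v ≠ 0) a a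

private lemma transGen_flip {Λ : Fin n → Fin n → ℕ} {x : Fin n} (hx : IsSink Λ x)
    {a b : Fin n} (h : Relation.TransGen (fun u v => flipO x Λ u v ≠ 0) a b) :
    b ≠ x ∧ (a ≠ x → Relation.TransGen (fun u v => Λ u v ≠ 0) a b) := by
  have step : ∀ u v : Fin n, flipO x Λ u v ≠ 0 → v ≠ x ∧ (u ≠ x → Λ u v ≠ 0) := by
    intro u v huv
    constructor
    · intro hvx
      apply huv
      simp only [flipO, hvx]
      rw [if_pos (by tauto)]
      exact hx u
    · intro hu
      by_cases hv : v = x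
      · exfalso
        apply huv
        simp only [flipO, hv]
        rw [if_pos (by tauto)]
        exact hx u
      · simp only [flipO] at huv
        rw [if_neg (by tauto)] at huv
        exact huv
  induction h with
  | single h1 =>
      obtain ⟨h2, h3⟩ := step _ _ h1
      exact ⟨h2, fun ha => Relation.TransGen.single (h3 ha)⟩
  | tail _ h1 ih =>
      obtain ⟨h2, h3⟩ := step _ _ h1
      exact ⟨h2, fun ha => (ih.2 ha).tail (h3 ih.1)⟩

private lemma acyc_flipO {Λ : Fin n → Fin n → ℕ} {x : Fin n} (hac : Acyc Λ)
    (hx : IsSink Λ x) : Acyc (flipO x Λ) := by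
  intro a h
  obtain ⟨hne, h2⟩ := transGen_flip hx h
  exact hac a (h2 hne)

private lemma acyc_orientAfter : ∀ (S : List (Fin n)) (Λ : Fin n → Fin n → ℕ),
    Acyc Λ → Admissible Λ S → Acyc (orientAfter Λ S)
  | [], _, hac, _ => hac
  | x :: S, Λ, hac, hS => acyc_orientAfter S (flipO x Λ) (acyc_flipO hac hS.1) hS.2

private lemma exists_sink_mem {Λ : Fin n → Fin n → ℕ} (hac : Acyc Λ)
    (W : Finset (Fin n)) (hne : W.Nonempty)
    (hcl : ∀ u ∈ W, ∀ v, Λ u v ≠ 0 → v ∈ W) : ∃ m ∈ W, IsSink Λ m := by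
  have hwf : WellFounded (fun a b : Fin n =>
      Relation.TransGen (fun u v => Λ u v ≠ 0) b a) := by
    have : IsTrans (Fin n) (fun a b : Fin n =>
        Relation.TransGen (fun u v => Λ u v ≠ 0) b a) :=
      ⟨fun _ _ _ h1 h2 => h2.trans h1⟩
    have : IsIrrefl (Fin n) (fun a b : Fin n =>
        Relation.TransGen (fun u v => Λ u v ≠ 0) b a) := ⟨fun a h => hac a h⟩
    exact Finite.wellFounded_of_trans_of_irrefl _
  obtain ⟨m, hm, hmin⟩ := hwf.has_min ↑W (by exact_mod_cast hne)
  refine ⟨m, hm, fun v => ?_⟩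
  by_contra hv
  exact hmin v (by exact_mod_cast hcl m hm v hv) (Relation.TransGen.single hv)

private lemma exists_round : ∀ (k : ℕ) (Λ : Fin n → Fin n → ℕ) (W : Finset (Fin n)),
    W.card = k → Acyc Λ → (∀ u ∈ W, ∀ v, Λ u v ≠ 0 → v ∈ W) →
    ∃ D : List (Fin n), D.Nodup ∧ D.toFinset = W ∧ Admissible Λ D
  | 0, Λ, W, hcard, _, _ => by
      rw [Finset.card_eq_zero] at hcard
      exact ⟨[], List.nodup_nil, by simp [hcard], trivial⟩
  | k + 1, Λ, W, hcard, hac, hcl => by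
      have hne : W.Nonempty := Finset.card_pos.mp (by omega)
      obtain ⟨m, hm, hsink⟩ := exists_sink_mem hac W hne hcl
      have hcard' : (W.erase m).card = k := by
        rw [Finset.card_erase_of_mem hm]; omega
      have hcl' : ∀ u ∈ W.erase m, ∀ v, flipO m Λ u v ≠ 0 → v ∈ W.erase m := by
        intro u hu v huv
        have hum : u ≠ m := Finset.ne_of_mem_erase hu
        by_cases hvm : v = m
        · exfalso; apply huv; simp only [flipO]; rw [if_pos (Or.inr hvm)]
          subst hvm; exact hsink u
        · simp only [flipO] at huv
          rw [if_neg (by tauto)] at huv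
          exact Finset.mem_erase.mpr ⟨hvm, hcl u (Finset.mem_of_mem_erase hu) v huv⟩
      obtain ⟨D', hnd', htf', hadm'⟩ :=
        exists_round k (flipO m Λ) (W.erase m) hcard' (acyc_flipO hac hsink) hcl'
      refine ⟨m :: D', ?_, ?_, hsink, hadm'⟩
      · rw [List.nodup_cons]
        refine ⟨?_, hnd'⟩
        intro hmem
        have : m ∈ W.erase m := htf' ▸ List.mem_toFinset.mpr hmem
        exact absurd this (Finset.notMem_erase m W)
      · rw [List.toFinset_cons, htf', Finset.insert_erase hm]

private lemma orientAfter_nodup : ∀ (D : List (Fin n)) (Λ : Fin n → Fin n → ℕ),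
    D.Nodup → ∀ a b, orientAfter Λ D a b = if (a ∈ D) ↔ (b ∈ D) then Λ a b else Λ b a
  | [], Λ, _, a, b => by simp [orientAfter]
  | x :: D, Λ, hnd, a, b => by
      rw [List.nodup_cons] at hnd
      have ih := orientAfter_nodup D (flipO x Λ) hnd.2 a b
      show orientAfter (flipO x Λ) D a b = _
      rw [ih]
      have hx := hnd.1
      by_cases hax : a = x <;> by_cases hbx : b = x <;>
        by_cases haD : a ∈ D <;> by_cases hbD : b ∈ D <;>
        simp_all [flipO, List.mem_cons]

private lemma edgeCond_round {Λ : Fin n → Fin n → ℕ} {c : Fin n → ℕ} (h : EdgeCond Λ c)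
    (D : List (Fin n)) (hnd : D.Nodup) (hmem : ∀ v, v ∈ D ↔ 1 ≤ c v) :
    EdgeCond (orientAfter Λ D) (fun v => c v - 1) := by
  intro u v hne
  dsimp only
  rw [orientAfter_nodup D Λ hnd] at hne
  by_cases huD : u ∈ D <;> by_cases hvD : v ∈ D
  · rw [if_pos (by tauto)] at hne
    have h1 := h u v hne
    have h2 := (hmem u).mp huD
    have h3 := (hmem v).mp hvD
    constructor <;> omega
  · rw [if_neg (by tauto)] at hne
    have h1 := h v u hne
    have h2 := (hmem u).mp huD
    have h3 : ¬ 1 ≤ c v := fun hh => hvD ((hmem v).mpr hh)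
    constructor <;> omega
  · rw [if_neg (by tauto)] at hne
    have h1 := h v u hne
    have h2 : ¬ 1 ≤ c u := fun hh => huD ((hmem u).mpr hh)
    have h3 := (hmem v).mp hvD
    constructor <;> omega
  · rw [if_pos (by tauto)] at hne
    have h1 := h u v hne
    have h2 : ¬ 1 ≤ c u := fun hh => huD ((hmem u).mpr hh)
    have h3 : ¬ 1 ≤ c v := fun hh => hvD ((hmem v).mpr hh)
    constructor <;> omega

end LatticeProof3
section LatticeProof4
variable {n : ℕ}

private lemma exists_stairs : ∀ (N : ℕ) (Λ : Fin n → Fin n → ℕ) (c : Fin n → ℕ),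
    (∑ v, c v) ≤ N → Acyc Λ → EdgeCond Λ c →
    ∃ segs : List (List (Fin n)),
      Admissible Λ segs.flatten ∧
      (∀ seg ∈ segs, seg ≠ [] ∧ seg.Nodup) ∧
      (∀ i, suppOf (segs.getD i []) = {v | i + 1 ≤ c v}) ∧
      (∀ v, segs.flatten.count v = c v) := by
  intro N
  induction N with
  | zero =>
      intro Λ c hsum _ _
      have hz : ∀ v, c v = 0 := by
        intro v
        have : c v ≤ ∑ w, c w := Finset.single_le_sum (fun w _ => Nat.zero_le _)
          (Finset.mem_univ v)
        omega
      refine ⟨[], trivial, by simp, ?_, by simp [hz]⟩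
      intro i
      ext v
      simp [suppOf, hz]
  | succ N ih =>
      intro Λ c hsum hac hec
      by_cases hz : ∀ v, c v = 0
      · refine ⟨[], trivial, by simp, ?_, by simp [hz]⟩
        intro i
        ext v
        simp [suppOf, hz]
      · push_neg at hz
        obtain ⟨v₀, hv₀⟩ := hz
        set W : Finset (Fin n) := Finset.univ.filter (fun v => 1 ≤ c v) with hW
        have hclW : ∀ u ∈ W, ∀ v, Λ u v ≠ 0 → v ∈ W := by
          intro u hu v huv
          have h1 := (hec u v huv).1
          have h2 : 1 ≤ c u := by simp [hW] at hu; omega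
          simp [hW]
          omega
        obtain ⟨D, hnd, htf, hadmD⟩ := exists_round W.card Λ W rfl hac hclW
        have hmemD : ∀ v, v ∈ D ↔ 1 ≤ c v := by
          intro v
          rw [← List.mem_toFinset, htf, hW]
          simp
        have hec' : EdgeCond (orientAfter Λ D) (fun v => c v - 1) :=
          edgeCond_round hec D hnd hmemD
        have hac' : Acyc (orientAfter Λ D) := acyc_orientAfter D Λ hac hadmD
        have hsum' : (∑ v, (c v - 1)) ≤ N := by
          have hlt : (∑ v, (c v - 1)) < ∑ v, c v := by
            apply Finset.sum_lt_sum (fun w _ => Nat.sub_le _ _)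
            exact ⟨v₀, Finset.mem_univ v₀, by omega⟩
          omega
        obtain ⟨segs', hadm', hseg', hsupp', hcount'⟩ :=
          ih (orientAfter Λ D) (fun v => c v - 1) hsum' hac' hec'
        refine ⟨D :: segs', ?_, ?_, ?_, ?_⟩
        · rw [List.flatten_cons]
          exact admissible_append D Λ segs'.flatten hadmD hadm'
        · intro seg hseg
          rcases List.mem_cons.mp hseg with h | h
          · refine ⟨?_, by rw [h]; exact hnd⟩
            intro hnil
            have hv : v₀ ∈ D := (hmemD v₀).mpr (by omega)
            rw [h] at hnil
            rw [hnil] at hv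
            exact List.not_mem_nil hv
          · exact hseg' seg h
        · intro i
          cases i with
          | zero =>
              ext v
              simp only [List.getD_cons_zero, suppOf, Set.mem_setOf_eq]
              rw [hmemD v]
          | succ i =>
              have := hsupp' i
              rw [List.getD_cons_succ]
              rw [this]
              ext v
              simp only [Set.mem_setOf_eq]
              omega
        · intro v
          rw [List.flatten_cons, List.count_append]
          have h1 : D.count v = if v ∈ D then 1 else 0 := by
            split_ifs with h
            · exact List.count_eq_one_of_mem hnd h
            · exact List.count_eq_zero_of_not_mem h
          have h2 := hcount' v
          rw [h1, h2]
          by_cases hm : v ∈ D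
          · have := (hmemD v).mp hm
            simp [hm]
            omega
          · have : ¬ 1 ≤ c v := fun hh => hm ((hmemD v).mpr hh)
            simp [hm]
            omega

private lemma supp_drop_flatten : ∀ (segs : List (List (Fin n))) (c : Fin n → ℕ),
    (∀ i, suppOf (segs.getD i []) = {v | i + 1 ≤ c v}) →
    ∀ i, suppOf ((segs.drop i).flatten) = {v | i + 1 ≤ c v}
  | [], c, h, i => by
      have h0 := h i
      have hg : ([] : List (List (Fin n))).getD i [] = [] := by
        cases i <;> rfl
      rw [hg] at h0
      simpa using h0
  | seg :: rest, c, h, i => by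
      have hrest : ∀ j, suppOf (rest.getD j []) = {v | j + 1 ≤ c v - 1} := by
        intro j
        have := h (j + 1)
        rw [List.getD_cons_succ] at this
        rw [this]
        ext v
        simp only [Set.mem_setOf_eq]
        omega
      cases i with
      | zero =>
          have h0 := h 0
          rw [List.getD_cons_zero] at h0
          have hr := supp_drop_flatten rest (fun v => c v - 1) hrest 0
          rw [List.drop_zero] at hr
          rw [List.drop_zero, List.flatten_cons]
          ext v
          have hv0 : v ∈ suppOf seg ↔ 1 ≤ c v := by rw [h0]; simp
          have hv1 : v ∈ suppOf rest.flatten ↔ 1 ≤ c v - 1 := by rw [hr]; simp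
          simp only [suppOf, Set.mem_setOf_eq, List.mem_append] at hv0 hv1 ⊢
          constructor
          · rintro (hh | hh)
            · exact hv0.mp hh
            · have := hv1.mp hh; omega
          · intro hh
            exact Or.inl (hv0.mpr hh)
      | succ i =>
          have hr := supp_drop_flatten rest (fun v => c v - 1) hrest i
          rw [List.drop_succ_cons]
          rw [hr]
          ext v
          simp only [Set.mem_setOf_eq]
          omega

private lemma segments_of_stairs {Λ : Fin n → Fin n → ℕ} {S : List (Fin n)}
    {segs : List (List (Fin n))} {c : Fin n → ℕ}
    (hadm : Admissible Λ segs.flatten)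
    (hseg : ∀ seg ∈ segs, seg ≠ [] ∧ seg.Nodup)
    (hsupp : ∀ i, suppOf (segs.getD i []) = {v | i + 1 ≤ c v})
    (hsim : Sim (edges Λ) S segs.flatten) :
    Segments Λ S segs := by
  refine ⟨hadm, hsim, hseg, ?_⟩
  intro i _
  rw [hsupp i, supp_drop_flatten segs c hsupp i]

end LatticeProof4
section LatticeProof5
variable {n : ℕ}

private lemma exists_realization {Λ : Fin n → Fin n → ℕ} (hac : Acyc Λ) (c : Fin n → ℕ)
    (hec : EdgeCond Λ c) :
    ∃ M CM, Admissible Λ M ∧ Segments Λ M CM ∧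
      (∀ i, suppOf (CM.getD i []) = {v | i + 1 ≤ c v}) ∧ (∀ v, M.count v = c v) := by
  obtain ⟨segs, hadm, hseg, hsupp, hcount⟩ :=
    exists_stairs (∑ v, c v) Λ c le_rfl hac hec
  exact ⟨segs.flatten, segs, hadm,
    segments_of_stairs hadm hseg hsupp Relation.ReflTransGen.refl, hsupp, hcount⟩

private lemma segments_of_admissible {Λ : Fin n → Fin n → ℕ} (hac : Acyc Λ)
    {S : List (Fin n)} (hS : Admissible Λ S) :
    ∃ CS, Segments Λ S CS ∧ ∀ i, suppOf (CS.getD i []) = {v | i + 1 ≤ S.count v} := by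
  obtain ⟨segs, hadm, hseg, hsupp, hcount⟩ :=
    exists_stairs (∑ v, S.count v) Λ (fun v => S.count v) le_rfl hac
      (edgeCond_count S Λ hS)
  refine ⟨segs, segments_of_stairs hadm hseg hsupp
    (sim_of_count S Λ segs.flatten hS hadm (fun v => (hcount v).symm)), hsupp⟩

end LatticeProof5

theorem admissible_sequences_form_lattice
    (n : ℕ) (hn : 2 ≤ n) (Λ : Fin n → Fin n → ℕ)
    (hloop : ∀ a, Λ a a = 0)
    (hconn : ∀ a b : Fin n, Relation.ReflTransGen (fun u v => edges Λ u v ≠ 0) a b)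
    (hacyc : ∀ a : Fin n, ¬ Relation.TransGen (fun u v => Λ u v ≠ 0) a a)
    : (∀ S, Admissible Λ S → Preceq Λ S S) ∧
    (∀ S T U, Admissible Λ S → Admissible Λ T → Admissible Λ U →
      Preceq Λ S T → Preceq Λ T U → Preceq Λ S U) ∧
    (∀ S T, Admissible Λ S → Admissible Λ T →
      ((Preceq Λ S T ∧ Preceq Λ T S) ↔ Sim (edges Λ) S T)) ∧
    (∀ S T, Admissible Λ S → Admissible Λ T →
      ∃ MT, Admissible Λ MT ∧ IsMeet Λ S T MT ∧
        Preceq Λ MT S ∧ Preceq Λ MT T ∧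
        ∀ R, Admissible Λ R → Preceq Λ R S → Preceq Λ R T → Preceq Λ R MT) ∧
    (∀ S T, Admissible Λ S → Admissible Λ T →
      ∃ J, Admissible Λ J ∧ IsJoin Λ S T J ∧
        Preceq Λ S J ∧ Preceq Λ T J ∧
        ∀ R, Admissible Λ R → Preceq Λ S R → Preceq Λ T R → Preceq Λ J R) := by
  have hac : Acyc Λ := hacyc
  refine ⟨?_, ?_, ?_, ?_, ?_⟩
  · intro S hS
    exact ⟨[], trivial, by rw [List.append_nil]; exact Relation.ReflTransGen.refl⟩
  · intro S T U hS hT hU h1 h2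
    exact preceq_of_count_le S Λ U hS hU
      (fun v => le_trans (count_le_of_preceq h1 v) (count_le_of_preceq h2 v))
  · intro S T hS hT
    constructor
    · rintro ⟨h1, h2⟩
      exact sim_of_count S Λ T hS hT
        (fun v => le_antisymm (count_le_of_preceq h1 v) (count_le_of_preceq h2 v))
    · intro hsim
      exact ⟨⟨[], trivial, by rw [List.append_nil]; exact sim_symm Λ hsim⟩,
        ⟨[], trivial, by rw [List.append_nil]; exact hsim⟩⟩
  · intro S T hS hT
    have hcS := edgeCond_count S Λ hS
    have hcT := edgeCond_count T Λ hT
    have hec : EdgeCond Λ (fun v => min (S.count v) (T.count v)) := by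
      intro u v huv
      have a1 := hcS u v huv
      have a2 := hcT u v huv
      dsimp only at a1 a2 ⊢
      omega
    obtain ⟨M, CM, hMadm, hMseg, hMsupp, hMcount⟩ := exists_realization hac _ hec
    obtain ⟨CS, hCS, hCSsupp⟩ := segments_of_admissible hac hS
    obtain ⟨CT, hCT, hCTsupp⟩ := segments_of_admissible hac hT
    refine ⟨M, hMadm, ⟨CS, CT, CM, hCS, hCT, hMseg, ?_⟩, ?_, ?_, ?_⟩
    · intro i
      rw [hMsupp i, hCSsupp i, hCTsupp i]
      ext v
      simp only [Set.mem_setOf_eq, Set.mem_inter_iff]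
      omega
    · refine preceq_of_count_le M Λ S hMadm hS (fun v => ?_)
      rw [hMcount v]
      omega
    · refine preceq_of_count_le M Λ T hMadm hT (fun v => ?_)
      rw [hMcount v]
      omega
    · intro R hR h1 h2
      refine preceq_of_count_le R Λ M hR hMadm (fun v => ?_)
      rw [hMcount v]
      have b1 := count_le_of_preceq h1 v
      have b2 := count_le_of_preceq h2 v
      omega
  · intro S T hS hT
    have hcS := edgeCond_count S Λ hS
    have hcT := edgeCond_count T Λ hT
    have hec : EdgeCond Λ (fun v => max (S.count v) (T.count v)) := by
      intro u v huv
      have a1 := hcS u v huv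
      have a2 := hcT u v huv
      dsimp only at a1 a2 ⊢
      omega
    obtain ⟨J, CJ, hJadm, hJseg, hJsupp, hJcount⟩ := exists_realization hac _ hec
    obtain ⟨CS, hCS, hCSsupp⟩ := segments_of_admissible hac hS
    obtain ⟨CT, hCT, hCTsupp⟩ := segments_of_admissible hac hT
    refine ⟨J, hJadm, ⟨CS, CT, CJ, hCS, hCT, hJseg, ?_⟩, ?_, ?_, ?_⟩
    · intro i
      rw [hJsupp i, hCSsupp i, hCTsupp i]
      ext v
      simp only [Set.mem_setOf_eq, Set.mem_union]
      omega
    · refine preceq_of_count_le S Λ J hS hJadm (fun v => ?_)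
      rw [hJcount v]
      omega
    · refine preceq_of_count_le T Λ J hT hJadm (fun v => ?_)
      rw [hJcount v]
      omega
    · intro R hR h1 h2
      refine preceq_of_count_le J Λ R hJadm hR (fun v => ?_)
      rw [hJcount v]
      have b1 := count_le_of_preceq h1 v
      have b2 := count_le_of_preceq h2 v
      omega

end KP
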